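/- In the James space J, let e_n denote the unit vector basis and define e_n^1 = e_{2n} + e_1 and e_n^2 = e_{2n+1} − e_1. Then for no pair of infinite subsets M, L of ℕ is the combined sequence {e_n^1 : n ∈ M} ∪ {e_n^2 : n ∈ L} (in any enumeration) a Schauder basic sequence. -/

import Mathlib

/-- The James norm of a finitely supported sequence: the supremum over all finite
collections of pairwise disjoint intervals `I₁, ..., Iₙ` of
`(∑ i (∑_{k ∈ Iᵢ} a k)²)^{1/2}`. -/
noncomputable def jamesNorm (a : ℕ →₀ ℝ) : ℝ :=
  sSup {r : ℝ | ∃ (n : ℕ) (I : Fin n → Finset ℕ),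
    (∀ i, ∃ p q : ℕ, I i = Finset.Icc p q) ∧
    (∀ i j, i ≠ j → Disjoint (I i) (I j)) ∧
    r = Real.sqrt (∑ i, (∑ k ∈ I i, a k) ^ 2)}

/-- A sequence is Schauder basic: there is a uniform bound on the basis projections. -/
def IsSchauderBasicSeq {X : Type*} [NormedAddCommGroup X] [NormedSpace ℝ X] (v : ℕ → X) : Prop :=
  ∃ C : ℝ, 0 < C ∧ ∀ m n : ℕ, m ≤ n → ∀ a : ℕ → ℝ,
    ‖∑ j ∈ Finset.range m, a j • v j‖ ≤ C * ‖∑ j ∈ Finset.range n, a j • v j‖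

set_option maxHeartbeats 1000000

def JSet (a : ℕ →₀ ℝ) : Set ℝ :=
  {r : ℝ | ∃ (n : ℕ) (I : Fin n → Finset ℕ),
    (∀ i, ∃ p q : ℕ, I i = Finset.Icc p q) ∧
    (∀ i j, i ≠ j → Disjoint (I i) (I j)) ∧
    r = Real.sqrt (∑ i, (∑ k ∈ I i, a k) ^ 2)}

lemma jamesNorm_eq (a : ℕ →₀ ℝ) : jamesNorm a = sSup (JSet a) := rfl

lemma jset_le_l1 (a : ℕ →₀ ℝ) : ∀ r ∈ JSet a, r ≤ ∑ k ∈ a.support, |a k| := by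
  rintro r ⟨n, I, hIcc, hdisj, rfl⟩
  have habs : ∀ s : Finset ℕ, ∑ k ∈ s, |a k| ≤ ∑ k ∈ a.support, |a k| := by
    intro s
    have h1 : ∑ k ∈ s, |a k| = ∑ k ∈ s ∩ a.support, |a k| := by
      refine (Finset.sum_subset Finset.inter_subset_left ?_).symm
      intro k hk hk'
      have : a k = 0 := by
        by_contra h
        exact hk' (Finset.mem_inter.mpr ⟨hk, Finsupp.mem_support_iff.mpr h⟩)
      simp [this]
    rw [h1]
    exact Finset.sum_le_sum_of_subset_of_nonneg Finset.inter_subset_right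
      (fun k _ _ => abs_nonneg _)
  have h2 : ∑ i, (∑ k ∈ I i, a k) ^ 2 ≤ (∑ i, |∑ k ∈ I i, a k|) ^ 2 := by
    have := Finset.sum_sq_le_sq_sum_of_nonneg
      (s := Finset.univ) (f := fun i : Fin n => |∑ k ∈ I i, a k|) (fun i _ => abs_nonneg _)
    simpa [sq_abs] using this
  calc Real.sqrt (∑ i, (∑ k ∈ I i, a k) ^ 2)
      ≤ Real.sqrt ((∑ i, |∑ k ∈ I i, a k|) ^ 2) := Real.sqrt_le_sqrt h2
    _ = ∑ i, |∑ k ∈ I i, a k| := Real.sqrt_sq (Finset.sum_nonneg fun i _ => abs_nonneg _)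
    _ ≤ ∑ i, ∑ k ∈ I i, |a k| :=
        Finset.sum_le_sum fun i _ => Finset.abs_sum_le_sum_abs _ _
    _ = ∑ k ∈ Finset.univ.biUnion I, |a k| := by
        refine (Finset.sum_biUnion ?_).symm
        intro i _ j _ hij
        exact hdisj i j hij
    _ ≤ ∑ k ∈ a.support, |a k| := habs _

lemma bddAbove_jset (a : ℕ →₀ ℝ) : BddAbove (JSet a) :=
  ⟨_, fun r hr => jset_le_l1 a r hr⟩

lemma abs_interval_le_jamesNorm (a : ℕ →₀ ℝ) (p q : ℕ) :
    |∑ k ∈ Finset.Icc p q, a k| ≤ jamesNorm a := by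
  rw [jamesNorm_eq]
  refine le_csSup (bddAbove_jset a) ?_
  refine ⟨1, fun _ => Finset.Icc p q, fun i => ⟨p, q, rfl⟩, ?_, ?_⟩
  · intro i j hij; exact absurd (Subsingleton.elim i j) hij
  · rw [Fin.sum_univ_one, Real.sqrt_sq_eq_abs]

lemma jamesNorm_le (a : ℕ →₀ ℝ) (h : ∀ p q : ℕ, |∑ k ∈ Finset.Icc p q, a k| ≤ 2) :
    jamesNorm a ≤ Real.sqrt (4 * a.support.card) := by
  rw [jamesNorm_eq]
  refine Real.sSup_le ?_ (Real.sqrt_nonneg _)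
  rintro r ⟨n, I, hIcc, hdisj, rfl⟩
  apply Real.sqrt_le_sqrt
  classical
  set P := Finset.univ.filter (fun i : Fin n => ((I i) ∩ a.support).Nonempty) with hP
  have hzero : ∀ i ∈ Finset.univ, i ∉ P → (∑ k ∈ I i, a k) ^ 2 = 0 := by
    intro i _ hi
    have : ∀ k ∈ I i, a k = 0 := by
      intro k hk
      by_contra hak
      exact hi (Finset.mem_filter.mpr ⟨Finset.mem_univ _,
        ⟨k, Finset.mem_inter.mpr ⟨hk, Finsupp.mem_support_iff.mpr hak⟩⟩⟩)
    rw [Finset.sum_eq_zero this]; simp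
  have h1 : ∑ i, (∑ k ∈ I i, a k) ^ 2 = ∑ i ∈ P, (∑ k ∈ I i, a k) ^ 2 :=
    (Finset.sum_subset (Finset.filter_subset _ _) hzero).symm
  have h2 : ∑ i ∈ P, (∑ k ∈ I i, a k) ^ 2 ≤ ∑ _i ∈ P, (4:ℝ) := by
    refine Finset.sum_le_sum fun i _ => ?_
    obtain ⟨p, q, hpq⟩ := hIcc i
    rw [hpq]
    calc (∑ k ∈ Finset.Icc p q, a k) ^ 2 = |∑ k ∈ Finset.Icc p q, a k| ^ 2 := (sq_abs _).symm
      _ ≤ 2 ^ 2 := by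
          have := h p q
          nlinarith [abs_nonneg (∑ k ∈ Finset.Icc p q, a k)]
      _ = 4 := by norm_num
  have hcard : P.card ≤ a.support.card := by
    refine Finset.card_le_card_of_injOn
      (fun i => if h : ((I i) ∩ a.support).Nonempty then ((I i) ∩ a.support).min' h else 0)
      ?_ ?_
    · intro i hi
      have hne : ((I i) ∩ a.support).Nonempty := (Finset.mem_filter.mp hi).2
      simp only [dif_pos hne]
      exact Finset.mem_inter.mp (Finset.min'_mem _ hne) |>.2
    · intro i hi j hj hfij
      by_contra hij
      have hnei : ((I i) ∩ a.support).Nonempty := (Finset.mem_filter.mp hi).2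
      have hnej : ((I j) ∩ a.support).Nonempty := (Finset.mem_filter.mp hj).2
      simp only [dif_pos hnei, dif_pos hnej] at hfij
      have h1 : ((I i) ∩ a.support).min' hnei ∈ I i :=
        (Finset.mem_inter.mp (Finset.min'_mem _ hnei)).1
      have h2 : ((I j) ∩ a.support).min' hnej ∈ I j :=
        (Finset.mem_inter.mp (Finset.min'_mem _ hnej)).1
      exact (Finset.disjoint_left.mp (hdisj i j hij)) h1 (hfij ▸ h2)
  calc ∑ i, (∑ k ∈ I i, a k) ^ 2 ≤ ∑ _i ∈ P, (4:ℝ) := h1 ▸ h2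
    _ = 4 * P.card := by rw [Finset.sum_const, nsmul_eq_mul, mul_comm]
    _ ≤ 4 * a.support.card := by
        have h4 : (P.card : ℝ) ≤ a.support.card := by exact_mod_cast hcard
        nlinarith

/-- In the James space (here: a Banach space `X` with a sequence `(e n)`
whose finite linear combinations carry the James norm), setting
`e¹_n = e_{2n} + e_1` and `e²_n = e_{2n+1} - e_1`, for no pair of infinite subsets
`M, L ⊆ ℕ` is an enumeration `v` of `{e¹_n : n ∈ M} ∪ {e²_n : n ∈ L}` a Schauder
basic sequence. -/
theorem statement7 {X : Type*} [NormedAddCommGroup X] [NormedSpace ℝ X] [CompleteSpace X]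
    (e : ℕ → X) (he : ∀ a : ℕ →₀ ℝ, ‖a.sum fun k c => c • e k‖ = jamesNorm a)
    (M L : Set ℕ) (hM : M.Infinite) (hL : L.Infinite)
    (hM1 : ∀ n ∈ M, 1 ≤ n) (hL1 : ∀ n ∈ L, 1 ≤ n)
    (v : ℕ → X) (hv : Function.Injective v)
    (hrange : Set.range v =
      (fun n => e (2 * n) + e 1) '' M ∪ (fun n => e (2 * n + 1) - e 1) '' L) :
    ¬ IsSchauderBasicSeq v := by
  classical
  rintro ⟨C, hC, hproj⟩
  -- the linear combination map
  set T : (ℕ →₀ ℝ) →ₗ[ℝ] X := Finsupp.linearCombination ℝ e with hTdef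
  have hT : ∀ c : ℕ →₀ ℝ, ‖T c‖ = jamesNorm c := by
    intro c
    rw [hTdef, Finsupp.linearCombination_apply]
    exact he c
  -- e is injective
  have einj : Function.Injective e := by
    intro k k' hkk'
    by_contra hne
    have hd : T (Finsupp.single k 1 - Finsupp.single k' 1) = e k - e k' := by
      rw [map_sub]; simp [hTdef]
    have h1 : (1:ℝ) ≤ jamesNorm (Finsupp.single k 1 - Finsupp.single k' 1) := by
      have := abs_interval_le_jamesNorm (Finsupp.single k 1 - Finsupp.single k' 1) k k
      rw [Finset.Icc_self, Finset.sum_singleton, Finsupp.sub_apply,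
        Finsupp.single_eq_same, Finsupp.single_eq_of_ne' (Ne.symm hne)] at this
      simpa using this
    rw [← hT, hd, hkk', sub_self, norm_zero] at h1
    linarith
  -- step existence
  have hstep : ∀ c p : ℕ, ∃ t : ℕ × ℕ × ℕ × ℕ, t.1 ∈ M ∧ t.2.1 ∈ L ∧ c < t.1 ∧ t.1 < t.2.1 ∧
      p < t.2.2.1 ∧ t.2.2.1 < t.2.2.2 ∧ v t.2.2.1 = e (2 * t.1) + e 1 ∧
      v t.2.2.2 = e (2 * t.2.1 + 1) - e 1 := by
    intro c p
    -- find m and its position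
    have hM' : (M \ Set.Iic c).Infinite := hM.diff (Set.finite_Iic c)
    have hinj1 : Set.InjOn (fun n => e (2 * n) + e 1) (M \ Set.Iic c) := by
      intro x _ y _ hxy
      have : e (2 * x) = e (2 * y) := by
        have := hxy; simpa using congrArg (fun z => z - e 1) this
      have := einj this; omega
    have himg1 : ((fun n => e (2 * n) + e 1) '' (M \ Set.Iic c)).Infinite :=
      hM'.image hinj1
    have hsub1 : ((fun n => e (2 * n) + e 1) '' (M \ Set.Iic c)) ⊆ Set.range v := by
      rw [hrange]
      exact (Set.image_mono Set.diff_subset).trans Set.subset_union_left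
    have hpre1 : (v ⁻¹' ((fun n => e (2 * n) + e 1) '' (M \ Set.Iic c))).Infinite :=
      himg1.preimage hsub1
    obtain ⟨j, hj, hjp⟩ : ∃ j ∈ v ⁻¹' ((fun n => e (2 * n) + e 1) '' (M \ Set.Iic c)), p < j := by
      have := hpre1.exists_gt p
      obtain ⟨j, hj1, hj2⟩ := this
      exact ⟨j, hj1, hj2⟩
    obtain ⟨m, hm, hvm⟩ := hj
    -- find l and its position
    have hL' : (L \ Set.Iic m).Infinite := hL.diff (Set.finite_Iic m)
    have hinj2 : Set.InjOn (fun n => e (2 * n + 1) - e 1) (L \ Set.Iic m) := by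
      intro x _ y _ hxy
      have : e (2 * x + 1) = e (2 * y + 1) := by
        simpa using congrArg (fun z => z + e 1) hxy
      have := einj this; omega
    have hpre2 : (v ⁻¹' ((fun n => e (2 * n + 1) - e 1) '' (L \ Set.Iic m))).Infinite := by
      refine (hL'.image hinj2).preimage ?_
      rw [hrange]
      exact (Set.image_mono Set.diff_subset).trans Set.subset_union_right
    obtain ⟨k, hk, hkj⟩ := hpre2.exists_gt j
    obtain ⟨l, hl, hvl⟩ := hk
    exact ⟨(m, l, j, k), hm.1, hl.1, by simpa using hm.2, by simpa using hl.2, hjp, hkj,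
      hvm.symm, hvl.symm⟩
  choose F hF using hstep
  set g : ℕ → ℕ × ℕ × ℕ × ℕ := fun n => Nat.rec (F 0 0) (fun _ ih => F ih.2.1 ih.2.2.2) n
    with hgdef
  set mm : ℕ → ℕ := fun i => (g i).1 with hmm
  set ll : ℕ → ℕ := fun i => (g i).2.1 with hll
  set pp : ℕ → ℕ := fun i => (g i).2.2.1 with hpp
  set qq : ℕ → ℕ := fun i => (g i).2.2.2 with hqq
  have hgprop : ∀ i, mm i ∈ M ∧ ll i ∈ L ∧ mm i < ll i ∧ pp i < qq i ∧
      v (pp i) = e (2 * mm i) + e 1 ∧ v (qq i) = e (2 * ll i + 1) - e 1 ∧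
      (∀ j, i = j + 1 → ll j < mm i ∧ qq j < pp i) := by
    intro i
    cases i with
    | zero =>
      obtain ⟨h1, h2, h3, h4, h5, h6, h7, h8⟩ := hF 0 0
      exact ⟨h1, h2, h4, h6, h7, h8, fun j hj => by omega⟩
    | succ n =>
      obtain ⟨h1, h2, h3, h4, h5, h6, h7, h8⟩ := hF (g n).2.1 (g n).2.2.2
      refine ⟨h1, h2, h4, h6, h7, h8, fun j hj => ?_⟩
      have : j = n := by omega
      subst this
      exact ⟨h3, h5⟩
  have hcl : ∀ i, mm i < ll i := fun i => (hgprop i).2.2.1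
  have hpq : ∀ i, pp i < qq i := fun i => (hgprop i).2.2.2.1
  have hvp : ∀ i, v (pp i) = e (2 * mm i) + e 1 := fun i => (hgprop i).2.2.2.2.1
  have hvq : ∀ i, v (qq i) = e (2 * ll i + 1) - e 1 := fun i => (hgprop i).2.2.2.2.2.1
  have hcc : ∀ i, ll i < mm (i + 1) := fun i => ((hgprop (i+1)).2.2.2.2.2.2 i rfl).1
  have hqp : ∀ i, qq i < pp (i + 1) := fun i => ((hgprop (i+1)).2.2.2.2.2.2 i rfl).2
  have hll1 : ∀ i, 1 ≤ ll i := fun i => hL1 _ (hgprop i).2.1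
  have hppmono : StrictMono pp := strictMono_nat_of_lt_succ fun i => (hpq i).trans (hqp i)
  have hqqmono : StrictMono qq := strictMono_nat_of_lt_succ fun i => (hqp i).trans (hpq (i+1))
  have hmmmono : StrictMono mm := strictMono_nat_of_lt_succ fun i => (hcl i).trans (hcc i)
  have hqplt : ∀ i j, i < j → qq i < pp j := fun i j h =>
    (hqp i).trans_le (hppmono.monotone h)
  have hlm : ∀ i j, i < j → ll i < mm j := fun i j h =>
    (hcc i).trans_le (hmmmono.monotone h)
  -- membership iff
  have hppin : ∀ i t, (pp i < pp t ↔ i < t) := fun i t => hppmono.lt_iff_lt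
  have hqqin : ∀ i t, (qq i < pp t ↔ i < t) := by
    intro i t
    constructor
    · intro h
      by_contra hit
      push_neg at hit
      have h2 : pp t ≤ pp i := hppmono.monotone hit
      have h3 := hpq i
      omega
    · exact hqplt i t
  set K : ℕ := Nat.ceil (4 * C ^ 2) + 1 with hKdef
  have hK : 0 < K := by omega
  set al : ℕ → ℝ := fun i => if i < K then 1 else -1 with hal
  set a : ℕ → ℝ := fun j => ∑ i ∈ Finset.range (2 * K),
    (al i * (if j = pp i then 1 else 0) - al i * (if j = qq i then 1 else 0)) with ha
  -- the key partial sum computation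
  have hsum : ∀ t : ℕ, ∑ j ∈ Finset.range (pp t), a j • v j =
      ∑ i ∈ Finset.range (2 * K),
        ((if pp i < pp t then al i • v (pp i) else 0) -
         (if qq i < pp t then al i • v (qq i) else 0)) := by
    intro t
    have : ∀ j, a j • v j = ∑ i ∈ Finset.range (2 * K),
        ((if j = pp i then al i • v j else 0) - (if j = qq i then al i • v j else 0)) := by
      intro j
      rw [ha]
      simp only [Finset.sum_smul, sub_smul, mul_ite, mul_one, mul_zero, ite_smul, zero_smul]
    rw [Finset.sum_congr rfl (fun j _ => this j), Finset.sum_comm]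
    refine Finset.sum_congr rfl fun i _ => ?_
    rw [Finset.sum_sub_distrib, Finset.sum_ite_eq' (Finset.range (pp t)) (pp i)
      (fun j => al i • v j), Finset.sum_ite_eq' (Finset.range (pp t)) (qq i)
      (fun j => al i • v j)]
    simp [Finset.mem_range]
  -- prefix sum (t = K)
  have hy : ∑ j ∈ Finset.range (pp K), a j • v j =
      ∑ i ∈ Finset.range K, (v (pp i) - v (qq i)) := by
    rw [hsum K]
    have hvanish : ∀ i ∈ Finset.range (2 * K), i ∉ Finset.range K →
        ((if pp i < pp K then al i • v (pp i) else 0) -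
         (if qq i < pp K then al i • v (qq i) else 0)) = 0 := by
      intro i hi hni
      have hiK : ¬ (i < K) := fun h => hni (Finset.mem_range.mpr h)
      rw [if_neg (fun h => hiK ((hppin i K).mp h)), if_neg (fun h => hiK ((hqqin i K).mp h)),
        sub_zero]
    rw [← Finset.sum_subset (Finset.range_subset_range.mpr (by omega : K ≤ 2 * K)) hvanish]
    refine Finset.sum_congr rfl fun i hi => ?_
    have hiK : i < K := Finset.mem_range.mp hi
    rw [if_pos ((hppin i K).mpr hiK), if_pos ((hqqin i K).mpr hiK), hal]
    simp [hiK]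
  -- full sum (t = 2K)
  have hx : ∑ j ∈ Finset.range (pp (2 * K)), a j • v j =
      ∑ i ∈ Finset.range (2 * K), al i • (v (pp i) - v (qq i)) := by
    rw [hsum (2 * K)]
    refine Finset.sum_congr rfl fun i hi => ?_
    have hiK : i < 2 * K := Finset.mem_range.mp hi
    rw [if_pos ((hppin i (2*K)).mpr hiK), if_pos ((hqqin i (2*K)).mpr hiK), smul_sub]
  have halsum : ∑ i ∈ Finset.range (2 * K), al i = 0 := by
    have h1 : ∀ i ∈ Finset.Ico 0 K, al i = 1 := fun i hi => by
      rw [hal]; simp only [Finset.mem_Ico] at hi; simp [hi.2]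
    have h2 : ∀ i ∈ Finset.Ico K (2 * K), al i = -1 := fun i hi => by
      rw [hal]; simp only [Finset.mem_Ico] at hi; simp [Nat.not_lt.mpr hi.1]
    rw [Finset.range_eq_Ico, ← Finset.sum_Ico_consecutive _ (Nat.zero_le K)
      (by omega : K ≤ 2 * K), Finset.sum_congr rfl h1, Finset.sum_congr rfl h2,
      Finset.sum_const, Finset.sum_const, Nat.card_Ico, Nat.card_Ico]
    have h3 : 2 * K - K = K := by omega
    rw [h3]
    simp
  set cy : ℕ →₀ ℝ := Finsupp.single 1 ((2 * K : ℕ) : ℝ) +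
    ∑ i ∈ Finset.range K, (Finsupp.single (2 * mm i) (1:ℝ) -
      Finsupp.single (2 * ll i + 1) (1:ℝ)) with hcy
  set cx : ℕ →₀ ℝ := ∑ i ∈ Finset.range (2 * K),
    al i • (Finsupp.single (2 * mm i) (1:ℝ) - Finsupp.single (2 * ll i + 1) (1:ℝ)) with hcx
  -- T cy equals the prefix sum
  have hTy : T cy = ∑ j ∈ Finset.range (pp K), a j • v j := by
    rw [hy, hcy]
    rw [map_add, map_sum]
    have t1 : T (Finsupp.single 1 ((2 * K : ℕ) : ℝ)) = ((2 * K : ℕ) : ℝ) • e 1 := by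
      rw [hTdef, Finsupp.linearCombination_single]
    have t2 : ∀ i, T (Finsupp.single (2 * mm i) (1:ℝ) - Finsupp.single (2 * ll i + 1) (1:ℝ))
        = e (2 * mm i) - e (2 * ll i + 1) := by
      intro i
      rw [map_sub]
      simp [hTdef]
    rw [t1, Finset.sum_congr rfl (fun i _ => t2 i)]
    have t3 : ∀ i, v (pp i) - v (qq i) =
        (e (2 * mm i) - e (2 * ll i + 1)) + (2:ℝ) • e 1 := by
      intro i
      rw [hvp i, hvq i]
      module
    rw [Finset.sum_congr rfl (fun i _ => t3 i), Finset.sum_add_distrib, Finset.sum_const]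
    rw [add_comm]
    congr 1
    rw [Finset.card_range, ← Nat.cast_smul_eq_nsmul ℝ K ((2:ℝ) • e 1), smul_smul]
    congr 1
    push_cast
    ring
  -- T cx equals the full sum
  have hTx : T cx = ∑ j ∈ Finset.range (pp (2 * K)), a j • v j := by
    rw [hx, hcx, map_sum]
    have t2 : ∀ i, T (al i • (Finsupp.single (2 * mm i) (1:ℝ) -
        Finsupp.single (2 * ll i + 1) (1:ℝ))) = al i • (e (2 * mm i) - e (2 * ll i + 1)) := by
      intro i
      rw [map_smul, map_sub]
      simp [hTdef]
    rw [Finset.sum_congr rfl (fun i _ => t2 i)]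
    have t3 : ∀ i, al i • (v (pp i) - v (qq i)) =
        al i • (e (2 * mm i) - e (2 * ll i + 1)) + (al i * 2) • e 1 := by
      intro i
      rw [hvp i, hvq i]
      module
    rw [Finset.sum_congr rfl (fun i _ => t3 i), Finset.sum_add_distrib]
    have t4 : ∑ i ∈ Finset.range (2 * K), (al i * 2) • e 1 =
        ((∑ i ∈ Finset.range (2 * K), al i) * 2) • e 1 := by
      rw [← Finset.sum_smul, Finset.sum_mul]
    rw [t4, halsum]
    simp
  -- lower bound for the prefix
  have hcy1 : cy 1 = ((2 * K : ℕ) : ℝ) := by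
    rw [hcy, Finsupp.add_apply, Finsupp.single_eq_same, Finsupp.finset_sum_apply]
    have : ∀ i ∈ Finset.range K,
        ((Finsupp.single (2 * mm i) (1:ℝ) - Finsupp.single (2 * ll i + 1) (1:ℝ)) : ℕ →₀ ℝ) 1
          = 0 := by
      intro i _
      rw [Finsupp.sub_apply, Finsupp.single_eq_of_ne' (by omega : 2 * mm i ≠ 1),
        Finsupp.single_eq_of_ne' (by have := hll1 i; omega : 2 * ll i + 1 ≠ 1)]
      ring
    rw [Finset.sum_congr rfl this]
    simp
  have hlow : ((2 * K : ℕ) : ℝ) ≤ ‖∑ j ∈ Finset.range (pp K), a j • v j‖ := by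
    rw [← hTy, hT]
    have := abs_interval_le_jamesNorm cy 1 1
    rw [Finset.Icc_self, Finset.sum_singleton, hcy1] at this
    calc ((2 * K : ℕ) : ℝ) = |((2 * K : ℕ) : ℝ)| := by
          rw [abs_of_nonneg (by positivity)]
      _ ≤ jamesNorm cy := this
  -- interval sums of cx are bounded by 2
  have hint : ∀ p q : ℕ, |∑ k ∈ Finset.Icc p q, cx k| ≤ 2 := by
    intro p q
    have hev : ∑ k ∈ Finset.Icc p q, cx k = ∑ i ∈ Finset.range (2 * K),
        al i * ((if 2 * mm i ∈ Finset.Icc p q then (1:ℝ) else 0) -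
                (if 2 * ll i + 1 ∈ Finset.Icc p q then (1:ℝ) else 0)) := by
      have h1 : ∀ k, cx k = ∑ i ∈ Finset.range (2 * K),
          al i * ((if 2 * mm i = k then (1:ℝ) else 0) -
                  (if 2 * ll i + 1 = k then (1:ℝ) else 0)) := by
        intro k
        rw [hcx, Finsupp.finset_sum_apply]
        refine Finset.sum_congr rfl fun i _ => ?_
        rw [Finsupp.smul_apply, Finsupp.sub_apply, Finsupp.single_apply, Finsupp.single_apply,
          smul_eq_mul]
      rw [Finset.sum_congr rfl (fun k _ => h1 k), Finset.sum_comm]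
      refine Finset.sum_congr rfl fun i _ => ?_
      rw [← Finset.mul_sum, Finset.sum_sub_distrib, Finset.sum_ite_eq (Finset.Icc p q)
        (2 * mm i) (fun _ => (1:ℝ)), Finset.sum_ite_eq (Finset.Icc p q)
        (2 * ll i + 1) (fun _ => (1:ℝ))]
    rw [hev]
    set gg : ℕ → ℝ := fun i => (if 2 * mm i ∈ Finset.Icc p q then (1:ℝ) else 0) -
                (if 2 * ll i + 1 ∈ Finset.Icc p q then (1:ℝ) else 0) with hgg
    set A : Finset ℕ := (Finset.range (2 * K)).filter
      (fun i => 2 * mm i ∈ Finset.Icc p q ∧ 2 * ll i + 1 ∉ Finset.Icc p q) with hA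
    set B : Finset ℕ := (Finset.range (2 * K)).filter
      (fun i => 2 * mm i ∉ Finset.Icc p q ∧ 2 * ll i + 1 ∈ Finset.Icc p q) with hB
    have habs1 : ∀ i, |al i * gg i| ≤ |gg i| := by
      intro i
      rw [abs_mul, hal]
      by_cases h : i < K <;> simp [h]
    have hgz : ∀ i ∈ Finset.range (2 * K), i ∉ A ∪ B → |gg i| = 0 := by
      intro i hi hni
      rw [Finset.mem_union] at hni
      push_neg at hni
      obtain ⟨hnA, hnB⟩ := hni
      simp only [hgg]
      by_cases h1 : 2 * mm i ∈ Finset.Icc p q <;> by_cases h2 : 2 * ll i + 1 ∈ Finset.Icc p q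
      · rw [if_pos h1, if_pos h2, sub_self, abs_zero]
      · exact absurd (Finset.mem_filter.mpr ⟨hi, h1, h2⟩) hnA
      · exact absurd (Finset.mem_filter.mpr ⟨hi, h1, h2⟩) hnB
      · rw [if_neg h1, if_neg h2, sub_self, abs_zero]
    have hgb : ∀ i, |gg i| ≤ 1 := by
      intro i
      simp only [hgg]
      by_cases h1 : 2 * mm i ∈ Finset.Icc p q <;> by_cases h2 : 2 * ll i + 1 ∈ Finset.Icc p q
      · rw [if_pos h1, if_pos h2]; norm_num
      · rw [if_pos h1, if_neg h2]; norm_num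
      · rw [if_neg h1, if_pos h2]; norm_num
      · rw [if_neg h1, if_neg h2]; norm_num
    have hAcard : A.card ≤ 1 := by
      rw [Finset.card_le_one]
      intro i hi j hj
      rw [hA, Finset.mem_filter] at hi hj
      obtain ⟨hi0, hi1, hi2⟩ := hi
      obtain ⟨hj0, hj1, hj2⟩ := hj
      rw [Finset.mem_Icc] at hi1 hj1 hi2 hj2
      by_contra hij
      rcases Nat.lt_trichotomy i j with h | h | h
      · have h5 := hlm i j h; have h6 := hcl i; omega
      · exact hij h
      · have h5 := hlm j i h; have h6 := hcl j; omega
    have hBcard : B.card ≤ 1 := by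
      rw [Finset.card_le_one]
      intro i hi j hj
      rw [hB, Finset.mem_filter] at hi hj
      obtain ⟨hi0, hi1, hi2⟩ := hi
      obtain ⟨hj0, hj1, hj2⟩ := hj
      rw [Finset.mem_Icc] at hi1 hj1 hi2 hj2
      by_contra hij
      rcases Nat.lt_trichotomy i j with h | h | h
      · have h5 := hlm i j h; have h6 := hcl j; omega
      · exact hij h
      · have h5 := hlm j i h; have h6 := hcl i; omega
    calc |∑ i ∈ Finset.range (2 * K), al i * gg i|
        ≤ ∑ i ∈ Finset.range (2 * K), |al i * gg i| := Finset.abs_sum_le_sum_abs _ _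
      _ ≤ ∑ i ∈ Finset.range (2 * K), |gg i| := Finset.sum_le_sum fun i _ => habs1 i
      _ = ∑ i ∈ A ∪ B, |gg i| := by
          refine (Finset.sum_subset ?_ hgz).symm
          rw [hA, hB]
          exact Finset.union_subset (Finset.filter_subset _ _) (Finset.filter_subset _ _)
      _ ≤ ∑ _i ∈ A ∪ B, (1:ℝ) := Finset.sum_le_sum fun i _ => hgb i
      _ = (A ∪ B).card := by rw [Finset.sum_const, nsmul_eq_mul, mul_one]
      _ ≤ ((A.card : ℝ) + B.card) := by
          have := Finset.card_union_le A B
          push_cast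
          exact_mod_cast this
      _ ≤ 2 := by
          have h1 : (A.card : ℝ) ≤ 1 := by exact_mod_cast hAcard
          have h2 : (B.card : ℝ) ≤ 1 := by exact_mod_cast hBcard
          linarith
  -- support bound for cx
  have hsupp : cx.support.card ≤ 4 * K := by
    have h1 : cx.support ⊆ (Finset.range (2 * K)).biUnion
        (fun i => (al i • (Finsupp.single (2 * mm i) (1:ℝ) -
          Finsupp.single (2 * ll i + 1) (1:ℝ))).support) := by
      rw [hcx]
      exact Finsupp.support_finset_sum
    calc cx.support.card
        ≤ ((Finset.range (2 * K)).biUnion _).card := Finset.card_le_card h1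
      _ ≤ ∑ i ∈ Finset.range (2 * K), ((al i • (Finsupp.single (2 * mm i) (1:ℝ) -
            Finsupp.single (2 * ll i + 1) (1:ℝ))).support).card := Finset.card_biUnion_le
      _ ≤ ∑ _i ∈ Finset.range (2 * K), 2 := by
          refine Finset.sum_le_sum fun i _ => ?_
          have h2 : (al i • (Finsupp.single (2 * mm i) (1:ℝ) -
              Finsupp.single (2 * ll i + 1) (1:ℝ))).support ⊆
              {2 * mm i} ∪ {2 * ll i + 1} := by
            refine (Finsupp.support_smul).trans ?_
            refine (Finsupp.support_sub).trans ?_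
            exact Finset.union_subset_union Finsupp.support_single_subset
              Finsupp.support_single_subset
          calc _ ≤ ({2 * mm i} ∪ ({2 * ll i + 1} : Finset ℕ)).card := Finset.card_le_card h2
            _ ≤ 2 := by
                refine (Finset.card_union_le _ _).trans ?_
                simp
      _ = 4 * K := by rw [Finset.sum_const, Finset.card_range, smul_eq_mul]; ring
  -- upper bound for the full sum
  have hup : ‖∑ j ∈ Finset.range (pp (2 * K)), a j • v j‖ ≤ Real.sqrt (16 * K) := by
    rw [← hTx, hT]
    refine (jamesNorm_le cx hint).trans ?_
    apply Real.sqrt_le_sqrt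
    have : (cx.support.card : ℝ) ≤ 4 * K := by exact_mod_cast hsupp
    linarith
  -- combine
  have hK2 : K ≤ 2 * K := by omega
  have hmain := hproj (pp K) (pp (2 * K)) (hppmono.monotone hK2) a
  have hfinal : ((2 * K : ℕ) : ℝ) ≤ C * Real.sqrt (16 * K) := by
    calc ((2 * K : ℕ) : ℝ) ≤ ‖∑ j ∈ Finset.range (pp K), a j • v j‖ := hlow
      _ ≤ C * ‖∑ j ∈ Finset.range (pp (2 * K)), a j • v j‖ := hmain
      _ ≤ C * Real.sqrt (16 * K) := mul_le_mul_of_nonneg_left hup hC.le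
  -- derive contradiction
  have hKpos : (0:ℝ) < K := by exact_mod_cast hK
  have hsq : ((2 * K : ℕ) : ℝ) ^ 2 ≤ (C * Real.sqrt (16 * K)) ^ 2 :=
    pow_le_pow_left₀ (by positivity) hfinal 2
  rw [mul_pow, Real.sq_sqrt (by positivity)] at hsq
  push_cast at hsq
  -- hsq : (2 * K)^2 ≤ C^2 * (16 * K)
  have hceil : 4 * C ^ 2 ≤ ((⌈4 * C ^ 2⌉₊ : ℕ) : ℝ) := Nat.le_ceil _
  have hBnn : (0:ℝ) ≤ ((⌈4 * C ^ 2⌉₊ : ℕ) : ℝ) := Nat.cast_nonneg _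
  have hKc : (K:ℝ) = ((⌈4 * C ^ 2⌉₊ : ℕ) : ℝ) + 1 := by rw [hKdef]; push_cast; ring
  nlinarith [hsq, hceil, hBnn, hKc, hKpos]
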